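/- Assume in addition that ν_ψ is shift-invariant (its pull-back under Φ is σ-invariant). Let β : ℝ → ℝ satisfy P(tφ + β(t)·(ψ − αφ)) = 0 for all t ∈ ℝ, and assume β is differentiable at α. Then β'(α) = −(∫φ dν_ψ)/(∫(ψ − αφ) dν_ψ) = 1/(α − ∫ψ dν_ψ/∫φ dν_ψ); consequently the tangent line to the graph of β at the point (α, 1) intersects the x-axis at x = ∫ψ dν_ψ/∫φ dν_ψ. -/

import Mathlib

open Set Filter MeasureTheory Topology
open scoped ENNReal NNReal

noncomputable section

/-- A conformal iterated function system on a compact interval `X = [x₀, x₁] ⊂ ℝ`: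
finitely many (`d + 1`, with `d ≥ 1`) differentiable contractions mapping `X` into its
interior, satisfying the Hölder condition (each `f a` extends to a `C^{1+ε}`
diffeomorphism of an open interval `Y = (y₀, y₁) ⊃ X` onto its image, with `f a '' Y ⊆ Y`)
and the strong separation condition. -/
structure CIFS where
  d : ℕ
  one_le_d : 1 ≤ d
  x₀ : ℝ
  x₁ : ℝ
  x_lt : x₀ < x₁
  y₀ : ℝ
  y₁ : ℝ
  y₀_lt : y₀ < x₀
  y₁_gt : x₁ < y₁
  f : Fin (d + 1) → ℝ → ℝ
  maps_X : ∀ a, MapsTo (f a) (Icc x₀ x₁) (Ioo x₀ x₁)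
  r : ℝ
  r_pos : 0 < r
  r_lt_one : r < 1
  contr : ∀ a, ∀ u ∈ Icc x₀ x₁, ∀ v ∈ Icc x₀ x₁, |f a u - f a v| ≤ r * |u - v|
  maps_Y : ∀ a, MapsTo (f a) (Ioo y₀ y₁) (Ioo y₀ y₁)
  injOn_Y : ∀ a, InjOn (f a) (Ioo y₀ y₁)
  diff_Y : ∀ a, ∀ x ∈ Ioo y₀ y₁, DifferentiableAt ℝ (f a) x
  deriv_ne : ∀ a, ∀ x ∈ Ioo y₀ y₁, deriv (f a) x ≠ 0
  ε : NNReal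
  ε_pos : 0 < ε
  ε_le_one : ε ≤ 1
  hc : NNReal
  holder : ∀ a, HolderOnWith hc ε (deriv (f a)) (Ioo y₀ y₁)
  sep : ∀ a b, a ≠ b → Disjoint (f a '' Icc x₀ x₁) (f b '' Icc x₀ x₁)

namespace CIFS

/-- the compact interval `X`. -/
def X (S : CIFS) : Set ℝ := Icc S.x₀ S.x₁

/-- `fw ω = f_{x₁} ∘ ⋯ ∘ f_{x_n}` for the word `ω = x₁…x_n`. -/
def fw (S : CIFS) : List (Fin (S.d + 1)) → ℝ → ℝ
  | [] => id
  | a :: ω => S.f a ∘ fw S ω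

/-- the limit set `L = ⋂ n ⋃_{|ω| = n} f_ω(X)`. -/
def L (S : CIFS) : Set ℝ :=
  ⋂ n : ℕ, ⋃ ω ∈ {ω : List (Fin (S.d + 1)) | ω.length = n}, S.fw ω '' S.X

/-- the initial word `x₁…x_n` of a code `x = (x₁x₂…)` (here `x j` is the letter `x_{j+1}`). -/
def code (S : CIFS) (x : ℕ → Fin (S.d + 1)) (n : ℕ) : List (Fin (S.d + 1)) :=
  (List.range n).map x

/-- the coding map `Φ`: sends a code `x` to the unique point of `⋂ n, f_{x₁…x_n}(X)`
(this intersection is a singleton, so we may take its supremum). -/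
def Φ (S : CIFS) (x : ℕ → Fin (S.d + 1)) : ℝ :=
  sSup (⋂ n : ℕ, S.fw (S.code x n) '' S.X)

/-- the cylinder set `[ω] ⊆ L` of a word `ω`. -/
def cyl (S : CIFS) (ω : List (Fin (S.d + 1))) : Set ℝ :=
  S.Φ '' {x | S.code x ω.length = ω}

/-- the left shift on code space. -/
def shift (S : CIFS) (x : ℕ → Fin (S.d + 1)) : ℕ → Fin (S.d + 1) := fun n => x (n + 1)

/-- the Birkhoff sum `S_n g (ξ)` of `g : L → ℝ` evaluated at the point `ξ` with code `x`. -/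
def birk (S : CIFS) (g : ℝ → ℝ) (n : ℕ) (x : ℕ → Fin (S.d + 1)) : ℝ :=
  ∑ k ∈ Finset.range n, g (S.Φ fun j => x (j + k))

/-- the code of a point of `L` (a choice of inverse of the coding map `Φ`). -/
def codeOf (S : CIFS) (ξ : ℝ) : ℕ → Fin (S.d + 1) := Function.invFun S.Φ ξ

/-- the geometric potential `φ(ξ) = log |f'_{x₁}(Φ(σξ))|` for `ξ = (x₁x₂…) ∈ L`. -/
def geom (S : CIFS) : ℝ → ℝ := fun ξ =>
  Real.log |deriv (S.f (S.codeOf ξ 0)) (S.Φ (S.shift (S.codeOf ξ)))|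

/-- the `n`-th approximant `(1/n) log Σ_{|ω| = n} exp (sup_{ξ ∈ [ω]} S_n g(ξ))`
of the topological pressure. -/
def presSeq (S : CIFS) (g : ℝ → ℝ) (n : ℕ) : ℝ :=
  Real.log (∑ ω : Fin n → Fin (S.d + 1),
      Real.exp (sSup (S.birk g n '' {x : ℕ → Fin (S.d + 1) | ∀ i : Fin n, x i.1 = ω i}))) / n

/-- `P(g) = p` : the defining limit of the topological pressure exists and equals `p`. -/
def HasPressure (S : CIFS) (g : ℝ → ℝ) (p : ℝ) : Prop :=
  Tendsto (S.presSeq g) atTop (nhds p)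

/-- Hölder continuity on the limit set. -/
def HolderOn (S : CIFS) (g : ℝ → ℝ) : Prop :=
  ∃ c e : NNReal, 0 < e ∧ HolderOnWith c e g S.L

/-- the standing assumptions on the potential `ψ` (for the exponent `α`):
`ψ` is Hölder continuous, `ψ < 0`, `P(ψ) = 0` and `ψ > αφ` on `L`. -/
def GoodPotential (S : CIFS) (α : ℝ) (ψ : ℝ → ℝ) : Prop :=
  S.HolderOn ψ ∧ (∀ ξ ∈ S.L, ψ ξ < 0) ∧ S.HasPressure ψ 0 ∧
    ∀ ξ ∈ S.L, α * S.geom ξ < ψ ξ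

/-- the Gibbs property of the measure `ν` for the potential `ψ`. -/
def IsGibbs (S : CIFS) (ψ : ℝ → ℝ) (ν : Measure ℝ) : Prop :=
  ∃ c : ℝ, 1 ≤ c ∧ ∀ n : ℕ, ∀ x : ℕ → Fin (S.d + 1),
    c⁻¹ * Real.exp (S.birk ψ n x) ≤ (ν (S.cyl (S.code x n))).toReal ∧
      (ν (S.cyl (S.code x n))).toReal ≤ c * Real.exp (S.birk ψ n x)

/-- the set `E` of codes which are eventually constant equal to `0` or to `1`;
`L* = L \ Φ(E)`. -/
def Ecode (S : CIFS) : Set (ℕ → Fin (S.d + 1)) :=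
  {x | ∃ i : Fin (S.d + 1), (i = 0 ∨ i = 1) ∧ ∃ n : ℕ, ∀ k ≥ n, x k = i}

/-- the code `x` has an `i`-block of length `k` at the `n`-th level:
`x_n ≠ i`, `x_{n+k+1} ≠ i` and `x_{n+m} = i` for `1 ≤ m ≤ k`
(recall `x j` is the letter `x_{j+1}`). -/
def HasBlock (S : CIFS) (x : ℕ → Fin (S.d + 1)) (i : Fin (S.d + 1)) (k n : ℕ) : Prop :=
  x (n - 1) ≠ i ∧ x (n + k) ≠ i ∧ ∀ m : ℕ, 1 ≤ m → m ≤ k → x (n + m - 1) = i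

/-- the labelling convention: `f 0 (X)` is the leftmost and `f 1 (X)` the rightmost
interval of the first level. -/
def Labeled (S : CIFS) : Prop :=
  (∀ a : Fin (S.d + 1), a ≠ 0 → ∀ u ∈ S.f 0 '' S.X, ∀ v ∈ S.f a '' S.X, u < v) ∧
  (∀ a : Fin (S.d + 1), a ≠ 1 → ∀ u ∈ S.f 1 '' S.X, ∀ v ∈ S.f a '' S.X, v < u)

end CIFS

/-- the distribution function `F(t) = ν((-∞, t])` of a measure `ν`. -/
def distFun (ν : Measure ℝ) : ℝ → ℝ := fun t => (ν (Iic t)).toReal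

/-- the `α`-Hölder difference quotient `|F(ξ) - F(η)| / |ξ - η|^α`. -/
def hquot (F : ℝ → ℝ) (α ξ η : ℝ) : ℝ := |F ξ - F η| / |ξ - η| ^ α

/-- the `α`-Hölder derivative of `F` at `ξ` exists in `[0,∞]` and equals `ℓ`. -/
def HolderDerivAt (F : ℝ → ℝ) (α ξ : ℝ) (ℓ : ℝ≥0∞) : Prop :=
  Tendsto (fun η => ENNReal.ofReal (hquot F α ξ η)) (nhdsWithin ξ {ξ}ᶜ) (nhds ℓ)

/-- the set `Λ_ψ^α` of points of `L` where the `α`-Hölder derivative of the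
distribution function of the Gibbs measure `ν = ν_ψ` does not exist in `[0,∞]`. -/
def CIFS.Lambda (S : CIFS) (ψ : ℝ → ℝ) (α : ℝ) (ν : Measure ℝ) : Set ℝ :=
  {ξ ∈ S.L | ¬∃ ℓ : ℝ≥0∞, HolderDerivAt (distFun ν) α ξ ℓ}

namespace CIFS
variable (S : CIFS)

lemma X_compact : IsCompact S.X := isCompact_Icc

lemma X_nonempty : S.X.Nonempty := nonempty_Icc.mpr S.x_lt.le

lemma X_subset_Y : S.X ⊆ Ioo S.y₀ S.y₁ := fun x hx =>
  ⟨lt_of_lt_of_le S.y₀_lt hx.1, lt_of_le_of_lt hx.2 S.y₁_gt⟩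

lemma f_mapsTo (a : Fin (S.d + 1)) : MapsTo (S.f a) S.X S.X := fun x hx =>
  Ioo_subset_Icc_self (S.maps_X a hx)

lemma f_contOnX (a : Fin (S.d + 1)) : ContinuousOn (S.f a) S.X := fun x hx =>
  ((S.diff_Y a x (S.X_subset_Y hx)).continuousAt).continuousWithinAt

lemma fw_mapsTo (ω : List (Fin (S.d + 1))) : MapsTo (S.fw ω) S.X S.X := by
  induction ω with
  | nil => exact fun x hx => hx
  | cons a ω ih => exact fun x hx => S.f_mapsTo a (ih hx)

lemma fw_image_subset (ω : List (Fin (S.d + 1))) : S.fw ω '' S.X ⊆ S.X :=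
  (S.fw_mapsTo ω).image_subset

lemma fw_contOnX (ω : List (Fin (S.d + 1))) : ContinuousOn (S.fw ω) S.X := by
  induction ω with
  | nil => exact continuousOn_id
  | cons a ω ih => exact (S.f_contOnX a).comp ih (S.fw_mapsTo ω)

lemma fw_compact (ω : List (Fin (S.d + 1))) : IsCompact (S.fw ω '' S.X) :=
  S.X_compact.image_of_continuousOn (S.fw_contOnX ω)

lemma fw_dist (ω : List (Fin (S.d + 1))) {u v : ℝ} (hu : u ∈ S.X) (hv : v ∈ S.X) :
    |S.fw ω u - S.fw ω v| ≤ S.r ^ ω.length * |u - v| := by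
  induction ω with
  | nil => simp [fw]
  | cons a ω ih =>
    calc |S.f a (S.fw ω u) - S.f a (S.fw ω v)| ≤ S.r * |S.fw ω u - S.fw ω v| :=
          S.contr a _ (S.fw_mapsTo ω hu) _ (S.fw_mapsTo ω hv)
      _ ≤ S.r * (S.r ^ ω.length * |u - v|) := by
          exact mul_le_mul_of_nonneg_left ih S.r_pos.le
      _ = S.r ^ (a :: ω).length * |u - v| := by
          rw [List.length_cons]; ring

lemma fw_diam {ω : List (Fin (S.d + 1))} {p q : ℝ} (hp : p ∈ S.fw ω '' S.X)
    (hq : q ∈ S.fw ω '' S.X) : |p - q| ≤ S.r ^ ω.length * (S.x₁ - S.x₀) := by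
  obtain ⟨u, hu, rfl⟩ := hp
  obtain ⟨v, hv, rfl⟩ := hq
  refine (S.fw_dist ω hu hv).trans (mul_le_mul_of_nonneg_left ?_ (pow_nonneg S.r_pos.le _))
  rw [abs_sub_le_iff]
  constructor <;> linarith [hu.1, hu.2, hv.1, hv.2]

lemma code_length (x : ℕ → Fin (S.d + 1)) (n : ℕ) : (S.code x n).length = n := by
  simp [code]

lemma code_zero (x : ℕ → Fin (S.d + 1)) : S.code x 0 = [] := by simp [code]

lemma code_succ (x : ℕ → Fin (S.d + 1)) (n : ℕ) :
    S.code x (n + 1) = S.code x n ++ [x n] := by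
  simp [code, List.range_succ]

lemma code_succ' (x : ℕ → Fin (S.d + 1)) (n : ℕ) :
    S.code x (n + 1) = x 0 :: S.code (S.shift x) n := by
  simp only [code, List.range_succ_eq_map, List.map_cons, List.map_map]
  rfl

lemma fw_append (l₁ l₂ : List (Fin (S.d + 1))) :
    S.fw (l₁ ++ l₂) = S.fw l₁ ∘ S.fw l₂ := by
  induction l₁ with
  | nil => rfl
  | cons a l ih =>
    funext y
    show S.f a (S.fw (l ++ l₂) y) = S.f a (S.fw l (S.fw l₂ y))
    rw [ih]; rfl

lemma fw_take_subset (l : List (Fin (S.d + 1))) (n : ℕ) :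
    S.fw l '' S.X ⊆ S.fw (l.take n) '' S.X := by
  conv_lhs => rw [← List.take_append_drop n l]
  rw [fw_append, Set.image_comp]
  exact Set.image_mono (S.fw_mapsTo _).image_subset

lemma code_take (x : ℕ → Fin (S.d + 1)) (n m : ℕ) (h : n ≤ m) :
    (S.code x m).take n = S.code x n := by
  simp [code, ← List.map_take, List.take_range, Nat.min_eq_left h]

lemma nested (x : ℕ → Fin (S.d + 1)) (n : ℕ) :
    S.fw (S.code x (n + 1)) '' S.X ⊆ S.fw (S.code x n) '' S.X := by
  have := S.fw_take_subset (S.code x (n + 1)) n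
  rwa [S.code_take x n (n + 1) (Nat.le_succ n)] at this

lemma Phi_mem_iInter (x : ℕ → Fin (S.d + 1)) :
    S.Φ x ∈ ⋂ n : ℕ, S.fw (S.code x n) '' S.X := by
  have hne : (⋂ n : ℕ, S.fw (S.code x n) '' S.X).Nonempty := by
    refine IsCompact.nonempty_iInter_of_sequence_nonempty_isCompact_isClosed _
      (S.nested x) (fun n => (S.X_nonempty).image _) (S.fw_compact _)
      (fun n => (S.fw_compact _).isClosed)
  have hbdd : BddAbove (⋂ n : ℕ, S.fw (S.code x n) '' S.X) := by
    refine (S.fw_compact (S.code x 0)).bddAbove.mono ?_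
    exact Set.iInter_subset _ 0
  have hcl : IsClosed (⋂ n : ℕ, S.fw (S.code x n) '' S.X) :=
    isClosed_iInter fun n => (S.fw_compact _).isClosed
  exact hcl.csSup_mem hne hbdd

lemma Phi_mem (x : ℕ → Fin (S.d + 1)) (n : ℕ) : S.Φ x ∈ S.fw (S.code x n) '' S.X :=
  Set.mem_iInter.mp (S.Phi_mem_iInter x) n

lemma Phi_mem_X (x : ℕ → Fin (S.d + 1)) : S.Φ x ∈ S.X := by
  have := S.Phi_mem x 0
  rwa [S.code_zero, fw, Set.image_id] at this

lemma tendsto_rpow : Tendsto (fun n : ℕ => S.r ^ n * (S.x₁ - S.x₀)) atTop (nhds 0) := by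
  rw [show (0:ℝ) = 0 * (S.x₁ - S.x₀) by ring]
  exact (tendsto_pow_atTop_nhds_zero_of_lt_one S.r_pos.le S.r_lt_one).mul_const _

lemma eq_of_mem_all {x : ℕ → Fin (S.d + 1)} {p q : ℝ}
    (hp : ∀ n, p ∈ S.fw (S.code x n) '' S.X) (hq : ∀ n, q ∈ S.fw (S.code x n) '' S.X) :
    p = q := by
  have h : ∀ n : ℕ, |p - q| ≤ S.r ^ n * (S.x₁ - S.x₀) := by
    intro n
    have := S.fw_diam (hp n) (hq n)
    rwa [S.code_length] at this
  have : |p - q| ≤ 0 := ge_of_tendsto' S.tendsto_rpow h |>.trans_eq rfl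
  have : |p - q| = 0 := le_antisymm this (abs_nonneg _)
  have := abs_eq_zero.mp this
  linarith

lemma Phi_shift (x : ℕ → Fin (S.d + 1)) : S.Φ x = S.f (x 0) (S.Φ (S.shift x)) := by
  refine S.eq_of_mem_all (S.Phi_mem x) (fun n => ?_)
  cases n with
  | zero =>
    rw [S.code_zero, fw, Set.image_id]
    exact S.f_mapsTo (x 0) (S.Phi_mem_X (S.shift x))
  | succ m =>
    rw [S.code_succ' x m, fw]
    obtain ⟨u, hu, hval⟩ := S.Phi_mem (S.shift x) m
    exact ⟨u, hu, by simp [Function.comp, hval]⟩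


lemma fw_image_disjoint : ∀ ω τ : List (Fin (S.d + 1)), ω.length = τ.length → ω ≠ τ →
    Disjoint (S.fw ω '' S.X) (S.fw τ '' S.X) := by
  intro ω
  induction ω with
  | nil => intro τ h hne; cases τ with
    | nil => exact absurd rfl hne
    | cons b τ => simp at h
  | cons a ω ih =>
    intro τ h hne
    cases τ with
    | nil => simp at h
    | cons b τ =>
      simp only [List.length_cons, Nat.add_right_cancel_iff] at h
      by_cases hab : a = b
      · subst hab
        have hωτ : ω ≠ τ := fun hh => hne (by rw [hh])
        have hd := ih τ h hωτ
        refine Set.disjoint_image_image (fun u hu v hv => ?_) |>.mono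
          (le_of_eq (Set.image_comp _ _ _)) (le_of_eq (Set.image_comp _ _ _))
        have huv : u ≠ v := fun hh => (Set.disjoint_left.mp hd hu) (hh ▸ hv)
        exact fun hh => huv (S.injOn_Y a (S.X_subset_Y (S.fw_image_subset ω hu))
          (S.X_subset_Y (S.fw_image_subset τ hv)) hh)
      · have h1 : S.fw (a :: ω) '' S.X ⊆ S.f a '' S.X := by
          rw [show S.fw (a :: ω) = S.f a ∘ S.fw ω from rfl, Set.image_comp]
          exact Set.image_mono (S.fw_image_subset ω)
        have h2 : S.fw (b :: τ) '' S.X ⊆ S.f b '' S.X := by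
          rw [show S.fw (b :: τ) = S.f b ∘ S.fw τ from rfl, Set.image_comp]
          exact Set.image_mono (S.fw_image_subset τ)
        exact (S.sep a b hab).mono h1 h2

lemma code_one (x : ℕ → Fin (S.d + 1)) : S.code x 1 = [x 0] := by
  simp [code, List.range_succ]

lemma Phi_fst {x y : ℕ → Fin (S.d + 1)} (h : S.Φ x = S.Φ y) : x 0 = y 0 := by
  by_contra hne
  have hx := S.Phi_mem x 1
  have hy := S.Phi_mem y 1
  rw [S.code_one] at hx
  rw [S.code_one, ← h] at hy
  have hd := S.fw_image_disjoint [x 0] [y 0] rfl (by simpa using hne)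
  exact Set.disjoint_left.mp hd hx hy

lemma Phi_shift_eq {x y : ℕ → Fin (S.d + 1)} (h : S.Φ x = S.Φ y) :
    S.Φ (S.shift x) = S.Φ (S.shift y) := by
  have h0 : x 0 = y 0 := S.Phi_fst h
  have hx := S.Phi_shift x
  have hy := S.Phi_shift y
  rw [hx, hy, h0] at h
  exact S.injOn_Y (y 0) (S.X_subset_Y (S.Phi_mem_X _)) (S.X_subset_Y (S.Phi_mem_X _)) h

lemma Phi_injective : Function.Injective S.Φ := by
  have key : ∀ n : ℕ, ∀ x y : ℕ → Fin (S.d + 1), S.Φ x = S.Φ y → x n = y n := by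
    intro n
    induction n with
    | zero => exact fun x y h => S.Phi_fst h
    | succ m ih => exact fun x y h => ih (S.shift x) (S.shift y) (S.Phi_shift_eq h)
  exact fun x y h => funext fun n => key n x y h

lemma code_eq_of_agree {x y : ℕ → Fin (S.d + 1)} {n : ℕ} (h : ∀ i < n, y i = x i) :
    S.code y n = S.code x n := by
  simp only [code]
  exact List.map_congr_left fun i hi => h i (List.mem_range.mp hi)

lemma Phi_continuous : Continuous S.Φ := by
  rw [continuous_iff_continuousAt]
  intro x
  rw [ContinuousAt, Metric.tendsto_nhds]
  intro ε hε
  obtain ⟨n, hn⟩ := (S.tendsto_rpow.eventually_lt_const hε).exists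
  have hU : {y : ℕ → Fin (S.d + 1) | ∀ i < n, y i = x i} ∈ nhds x := by
    have : IsOpen {y : ℕ → Fin (S.d + 1) | ∀ i < n, y i = x i} := by
      have : {y : ℕ → Fin (S.d + 1) | ∀ i < n, y i = x i} =
          ⋂ i : Fin n, (fun y : ℕ → Fin (S.d + 1) => y i.1) ⁻¹' {x i.1} := by
        ext y; simp [Set.mem_iInter, Fin.forall_iff]
      rw [this]
      exact isOpen_iInter_of_finite fun i =>
        (continuous_apply (i : ℕ)).isOpen_preimage _ (isOpen_discrete _)
    exact this.mem_nhds (fun i _ => rfl)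
  filter_upwards [hU] with y hy
  have hc : S.code y n = S.code x n := S.code_eq_of_agree hy
  have h1 := S.Phi_mem y n
  rw [hc] at h1
  have h2 := S.fw_diam h1 (S.Phi_mem x n)
  rw [S.code_length] at h2
  rw [Real.dist_eq]
  exact h2.trans_lt hn

lemma Phi_mem_L (x : ℕ → Fin (S.d + 1)) : S.Φ x ∈ S.L := by
  rw [L]
  refine Set.mem_iInter.mpr fun n => ?_
  exact Set.mem_biUnion (S.code_length x n) (S.Phi_mem x n)

lemma range_Phi : Set.range S.Φ = S.L := by
  apply Set.Subset.antisymm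
  · rintro _ ⟨x, rfl⟩; exact S.Phi_mem_L x
  · intro ξ hξ
    rw [L] at hξ
    have hex : ∀ n : ℕ, ∃ ω : List (Fin (S.d + 1)), ω.length = n ∧ ξ ∈ S.fw ω '' S.X := by
      intro n
      have := Set.mem_iInter.mp hξ n
      obtain ⟨ω, hω, hmem⟩ := Set.mem_iUnion₂.mp this
      exact ⟨ω, hω, hmem⟩
    choose W hW1 hW2 using hex
    have hpre : ∀ n : ℕ, (W (n + 1)).take n = W n := by
      intro n
      by_contra hne
      have hmem : ξ ∈ S.fw ((W (n + 1)).take n) '' S.X := S.fw_take_subset _ n (hW2 (n + 1))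
      have hlen : ((W (n + 1)).take n).length = (W n).length := by
        rw [List.length_take, hW1, hW1]; omega
      exact Set.disjoint_left.mp (S.fw_image_disjoint _ _ hlen hne) hmem (hW2 n)
    set x : ℕ → Fin (S.d + 1) := fun n => (W (n + 1)).getD n 0 with hx
    have hcode : ∀ n : ℕ, S.code x n = W n := by
      intro n
      induction n with
      | zero => rw [S.code_zero]; exact (List.length_eq_zero_iff.mp (hW1 0)).symm
      | succ m ih =>
        have hm : m < (W (m + 1)).length := by rw [hW1]; omega
        have : W (m + 1) = (W (m + 1)).take (m + 1) := by
          rw [List.take_of_length_le (by rw [hW1])]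
        rw [S.code_succ, ih, ← hpre m]
        have h2 : List.take (m + 1) (W (m + 1)) =
            List.take m (W (m + 1)) ++ [(W (m + 1)).getD m 0] := by
          rw [List.take_succ, List.getElem?_eq_getElem hm]
          simp [List.getElem?_eq_getElem hm]
        show List.take m (W (m + 1)) ++ [(W (m + 1)).getD m 0] = W (m + 1)
        rw [← h2, ← this]
    refine ⟨x, S.eq_of_mem_all (S.Phi_mem x) (fun n => ?_)⟩
    rw [hcode n]
    exact hW2 n

lemma measurableEmbedding_Phi : MeasurableEmbedding S.Φ :=
  (S.Phi_continuous.isClosedEmbedding S.Phi_injective).measurableEmbedding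

/-- the geometric potential read on code space. -/
def gphi (x : ℕ → Fin (S.d + 1)) : ℝ :=
  Real.log |deriv (S.f (x 0)) (S.Φ (S.shift x))|

lemma geom_Phi (x : ℕ → Fin (S.d + 1)) : S.geom (S.Φ x) = S.gphi x := by
  have h : S.codeOf (S.Φ x) = x := Function.leftInverse_invFun S.Phi_injective x
  rw [geom, codeOf] at *
  rw [h]
  rfl

lemma shift_continuous : Continuous S.shift :=
  continuous_pi fun n => continuous_apply (n + 1)

lemma shift_measurable : Measurable S.shift :=
  S.shift_continuous.measurable

lemma gphi_continuous : Continuous S.gphi := by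
  rw [continuous_iff_continuousAt]
  intro x
  have hU : {y : ℕ → Fin (S.d + 1) | y 0 = x 0} ∈ nhds x := by
    have : IsOpen ((fun p : ℕ → Fin (S.d + 1) => p 0) ⁻¹' {x 0}) :=
      (continuous_apply 0).isOpen_preimage _ (isOpen_discrete _)
    exact this.mem_nhds rfl
  have hmem : S.Φ (S.shift x) ∈ Ioo S.y₀ S.y₁ := S.X_subset_Y (S.Phi_mem_X _)
  have hc0 : ContinuousAt (fun y => S.Φ (S.shift y)) x :=
    (S.Phi_continuous.comp S.shift_continuous).continuousAt
  have hder : ContinuousAt (deriv (S.f (x 0))) (S.Φ (S.shift x)) :=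
    ((S.holder (x 0)).continuousOn S.ε_pos).continuousAt (isOpen_Ioo.mem_nhds hmem)
  have hlog : ContinuousAt (fun z => Real.log |z|) (deriv (S.f (x 0)) (S.Φ (S.shift x))) := by
    refine (Real.continuousAt_log ?_).comp continuous_abs.continuousAt
    simpa using S.deriv_ne (x 0) _ hmem
  have hc : ContinuousAt (fun y => Real.log |deriv (S.f (x 0)) (S.Φ (S.shift y))|) x := by
    have h1 : ContinuousAt (fun y => deriv (S.f (x 0)) (S.Φ (S.shift y))) x :=
      ContinuousAt.comp (f := fun y => S.Φ (S.shift y)) hder hc0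
    exact ContinuousAt.comp (f := fun y => deriv (S.f (x 0)) (S.Φ (S.shift y))) hlog h1
  refine hc.congr ?_
  filter_upwards [hU] with y hy
  simp only [gphi, hy]

lemma psiPhi_continuous {g : ℝ → ℝ} (hg : S.HolderOn g) : Continuous (fun x => g (S.Φ x)) := by
  obtain ⟨c, e, he, hh⟩ := hg
  exact (hh.continuousOn he).comp_continuous S.Phi_continuous fun x => S.Phi_mem_L x

/-- the `k`-fold shift. -/
def shl (k : ℕ) (x : ℕ → Fin (S.d + 1)) : ℕ → Fin (S.d + 1) := fun j => x (j + k)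

lemma shl_succ (k : ℕ) (x : ℕ → Fin (S.d + 1)) : S.shl (k + 1) x = S.shl k (S.shift x) := rfl

lemma shl_continuous (k : ℕ) : Continuous (S.shl k) :=
  continuous_pi fun n => continuous_apply (n + k)

lemma birk_eq (g : ℝ → ℝ) (n : ℕ) (x : ℕ → Fin (S.d + 1)) :
    S.birk g n x = ∑ k ∈ Finset.range n, (fun y => g (S.Φ y)) (S.shl k x) := rfl

lemma integral_shl {μ : Measure (ℕ → Fin (S.d + 1))} [IsFiniteMeasure μ]
    (hinv : μ.map S.shift = μ) {h : (ℕ → Fin (S.d + 1)) → ℝ} (hh : Continuous h) (k : ℕ) :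
    ∫ x, h (S.shl k x) ∂μ = ∫ x, h x ∂μ := by
  induction k with
  | zero => rfl
  | succ m ih =>
    calc ∫ x, h (S.shl (m + 1) x) ∂μ
        = ∫ x, (fun y => h (S.shl m y)) (S.shift x) ∂μ := rfl
      _ = ∫ y, h (S.shl m y) ∂(μ.map S.shift) := by
          rw [integral_map S.shift_measurable.aemeasurable]
          rw [hinv]
          exact ((hh.comp (S.shl_continuous m)).aestronglyMeasurable)
      _ = ∫ y, h (S.shl m y) ∂μ := by rw [hinv]
      _ = ∫ x, h x ∂μ := ih

lemma cont_integrable {μ : Measure (ℕ → Fin (S.d + 1))} [IsFiniteMeasure μ]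
    {h : (ℕ → Fin (S.d + 1)) → ℝ} (hh : Continuous h) : Integrable h μ :=
  integrableOn_univ.mp (hh.continuousOn.integrableOn_compact isCompact_univ)

lemma exists_bound {h : (ℕ → Fin (S.d + 1)) → ℝ} (hh : Continuous h) :
    ∃ B : ℝ, ∀ y, h y ≤ B := by
  obtain ⟨z, _, hz⟩ := isCompact_univ.exists_isMaxOn univ_nonempty hh.continuousOn
  exact ⟨h z, fun y => hz (mem_univ y)⟩

/-- the cylinder of a word in code space. -/
def cylC (n : ℕ) (ω : Fin n → Fin (S.d + 1)) : Set (ℕ → Fin (S.d + 1)) :=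
  {x | ∀ i : Fin n, x i.1 = ω i}

lemma cylC_measurable (n : ℕ) (ω : Fin n → Fin (S.d + 1)) : MeasurableSet (S.cylC n ω) := by
  have : S.cylC n ω = ⋂ i : Fin n, (fun x : ℕ → Fin (S.d + 1) => x i.1) ⁻¹' {ω i} := by
    ext x; simp [cylC, Set.mem_iInter]
  rw [this]
  exact MeasurableSet.iInter fun i => measurable_pi_apply i.1 (measurableSet_singleton _)

lemma cylC_nonempty (n : ℕ) (ω : Fin n → Fin (S.d + 1)) : (S.cylC n ω).Nonempty := by
  refine ⟨fun j => if h : j < n then ω ⟨j, h⟩ else 0, fun i => ?_⟩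
  show (if h : (i : ℕ) < n then ω ⟨(i : ℕ), h⟩ else 0) = ω i
  rw [dif_pos i.isLt]

lemma cylC_disjoint (n : ℕ) : Set.Pairwise (Set.univ : Set (Fin n → Fin (S.d + 1)))
    (Function.onFun Disjoint (S.cylC n)) := by
  intro ω _ ω' _ hne
  rw [Function.onFun, Set.disjoint_left]
  intro x hx hx'
  exact hne (funext fun i => (hx i).symm.trans (hx' i))

lemma cylC_union (n : ℕ) : ⋃ ω ∈ (Finset.univ : Finset (Fin n → Fin (S.d + 1))), S.cylC n ω =
    Set.univ := by
  refine Set.eq_univ_of_forall fun x => ?_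
  exact Set.mem_biUnion (Finset.mem_univ (fun i : Fin n => x i.1)) (fun i => rfl)

lemma code_eq_iff (x y : ℕ → Fin (S.d + 1)) (n : ℕ) :
    S.code y n = S.code x n ↔ ∀ i < n, y i = x i := by
  rw [code, code, List.map_inj_left]; simp

lemma cyl_eq (n : ℕ) (ω : Fin n → Fin (S.d + 1)) {x : ℕ → Fin (S.d + 1)} (hx : x ∈ S.cylC n ω) :
    S.cyl (S.code x n) = S.Φ '' S.cylC n ω := by
  have hset : {y | S.code y n = S.code x n} = S.cylC n ω := by
    ext y
    rw [Set.mem_setOf_eq, S.code_eq_iff]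
    constructor
    · exact fun h i => (h i.1 i.2).trans (hx i)
    · exact fun h i hi => (h ⟨i, hi⟩).trans (hx ⟨i, hi⟩).symm
  rw [cyl, S.code_length, hset]

lemma birk_le_bound {g : ℝ → ℝ} {B : ℝ} (hB : ∀ y, g (S.Φ y) ≤ B) (n : ℕ)
    (x : ℕ → Fin (S.d + 1)) : S.birk g n x ≤ n * B := by
  rw [birk_eq]
  calc ∑ k ∈ Finset.range n, (fun y => g (S.Φ y)) (S.shl k x) ≤ ∑ _k ∈ Finset.range n, B :=
        Finset.sum_le_sum fun k _ => hB _
    _ = n * B := by rw [Finset.sum_const, Finset.card_range, nsmul_eq_mul]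

lemma birk_bddAbove {g : ℝ → ℝ} {B : ℝ} (hB : ∀ y, g (S.Φ y) ≤ B) (n : ℕ)
    (s : Set (ℕ → Fin (S.d + 1))) : BddAbove (S.birk g n '' s) := by
  refine ⟨n * B, ?_⟩
  rintro _ ⟨x, _, rfl⟩
  exact S.birk_le_bound hB n x

/-- The key "variational" inequality: if `μ` is a shift-invariant probability Gibbs measure
for `ψg` (read on code space) and `P(g) = 0`, then `∫ (g - ψg)∘Φ dμ ≤ 0`. -/
lemma integral_sub_nonpos {g ψg : ℝ → ℝ} {μ : Measure (ℕ → Fin (S.d + 1))}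
    [IsProbabilityMeasure μ] {c : ℝ} (hc : 1 ≤ c)
    (hgc : Continuous fun y => g (S.Φ y)) (hψc : Continuous fun y => ψg (S.Φ y))
    (hgibbs : ∀ n : ℕ, ∀ x : ℕ → Fin (S.d + 1),
      c⁻¹ * Real.exp (S.birk ψg n x) ≤ (μ (S.cylC n fun i => x i.1)).toReal ∧
        (μ (S.cylC n fun i => x i.1)).toReal ≤ c * Real.exp (S.birk ψg n x))
    (hinv : μ.map S.shift = μ) (hpres : S.HasPressure g 0) :
    ∫ y, (g (S.Φ y) - ψg (S.Φ y)) ∂μ ≤ 0 := by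
  set u : (ℕ → Fin (S.d + 1)) → ℝ := fun y => g (S.Φ y) - ψg (S.Φ y) with hu
  have huc : Continuous u := hgc.sub hψc
  set U : ℝ := ∫ y, u y ∂μ with hU
  obtain ⟨Bg, hBg⟩ := S.exists_bound hgc
  have hcpos : (0:ℝ) < c := lt_of_lt_of_le one_pos hc
  have key : ∀ n : ℕ, 1 ≤ n → (-Real.log c + n * U) / n ≤ S.presSeq g n := by
    intro n hn
    set C : (Fin n → Fin (S.d + 1)) → Set (ℕ → Fin (S.d + 1)) := fun ω => S.cylC n ω with hC
    set w : (Fin n → Fin (S.d + 1)) → ℝ := fun ω => (μ (C ω)).toReal with hw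
    set m : (Fin n → Fin (S.d + 1)) → ℝ := fun ω => sSup (S.birk g n '' C ω) with hm
    have hwnn : ∀ ω, 0 ≤ w ω := fun ω => ENNReal.toReal_nonneg
    have hwsum : ∑ ω, w ω = 1 := by
      rw [hw, ← ENNReal.toReal_sum fun ω _ => measure_ne_top μ _]
      rw [← measure_biUnion_finset (S.cylC_disjoint n |>.mono (by simp)) 
        (fun ω _ => S.cylC_measurable n ω)]
      rw [S.cylC_union n, measure_univ, ENNReal.toReal_one]
    have hgib : ∀ (ω) (x), x ∈ C ω →
        c⁻¹ * Real.exp (S.birk ψg n x) ≤ w ω ∧ w ω ≤ c * Real.exp (S.birk ψg n x) := by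
      intro ω x hx
      have h1 := hgibbs n x
      rwa [show (fun i : Fin n => x i.1) = ω from funext hx] at h1
    have hwpos : ∀ ω, 0 < w ω := by
      intro ω
      obtain ⟨x, hx⟩ := S.cylC_nonempty n ω
      exact lt_of_lt_of_le (by positivity) (hgib ω x hx).1
    have hbdd : ∀ ω, BddAbove (S.birk g n '' C ω) := fun ω => S.birk_bddAbove hBg n _
    have hmem_le : ∀ (ω) (x), x ∈ C ω → S.birk g n x ≤ m ω := fun ω x hx =>
      le_csSup (hbdd ω) ⟨x, hx, rfl⟩
    have hψlow : ∀ (ω) (x), x ∈ C ω → Real.log (w ω) - Real.log c ≤ S.birk ψg n x := by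
      intro ω x hx
      have h2 := (hgib ω x hx).2
      have h3 := Real.log_le_log (hwpos ω) h2
      rw [Real.log_mul hcpos.ne' (Real.exp_ne_zero _), Real.log_exp] at h3
      linarith
    have hsplit : ∀ x, S.birk g n x = S.birk ψg n x + ∑ k ∈ Finset.range n, u (S.shl k x) := by
      intro x
      rw [birk_eq, birk_eq, ← Finset.sum_add_distrib]
      exact Finset.sum_congr rfl fun k _ => by simp [hu]
    set bs : (ℕ → Fin (S.d + 1)) → ℝ := fun x => ∑ k ∈ Finset.range n, u (S.shl k x) with hbs
    have hbs_cont : Continuous bs :=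
      continuous_finset_sum _ fun k _ => huc.comp (S.shl_continuous k)
    have hbs_int : Integrable bs μ := S.cont_integrable hbs_cont
    have hMle : ∀ (ω) (x), x ∈ C ω → bs x ≤ m ω - (Real.log (w ω) - Real.log c) := by
      intro ω x hx
      have h1 := hmem_le ω x hx
      have h2 := hψlow ω x hx
      have h3 := hsplit x
      simp only [hbs]
      linarith
    set v : (Fin n → Fin (S.d + 1)) → ℝ := fun ω => (w ω)⁻¹ * ∫ y in C ω, bs y ∂μ with hv
    have hvle : ∀ ω, v ω ≤ m ω - (Real.log (w ω) - Real.log c) := by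
      intro ω
      have hint : ∫ y in C ω, bs y ∂μ ≤ (m ω - (Real.log (w ω) - Real.log c)) * w ω := by
        have h1 : ∫ y in C ω, bs y ∂μ ≤
            ∫ _y in C ω, (m ω - (Real.log (w ω) - Real.log c)) ∂μ := by
          refine setIntegral_mono_on hbs_int.integrableOn (integrable_const _).integrableOn
            (S.cylC_measurable n ω) (hMle ω)
        rw [setIntegral_const, smul_eq_mul, mul_comm] at h1
        exact h1
      rw [hv, inv_mul_le_iff₀ (hwpos ω)]
      linarith [hint]
    have hexp : ∀ ω, c⁻¹ * (w ω * Real.exp (v ω)) ≤ Real.exp (m ω) := by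
      intro ω
      have h1 : Real.exp (v ω) ≤ Real.exp (m ω) * c / w ω := by
        have := Real.exp_le_exp.mpr (hvle ω)
        calc Real.exp (v ω) ≤ Real.exp (m ω - (Real.log (w ω) - Real.log c)) := this
          _ = Real.exp (m ω) * c / w ω := by
              rw [show m ω - (Real.log (w ω) - Real.log c) =
                m ω + Real.log c - Real.log (w ω) from by ring]
              rw [Real.exp_sub, Real.exp_add, Real.exp_log hcpos, Real.exp_log (hwpos ω)]
      calc c⁻¹ * (w ω * Real.exp (v ω)) ≤ c⁻¹ * (w ω * (Real.exp (m ω) * c / w ω)) := by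
            have := mul_le_mul_of_nonneg_left h1 (hwnn ω)
            have h2 : (0:ℝ) ≤ c⁻¹ := by positivity
            exact mul_le_mul_of_nonneg_left this h2
        _ = Real.exp (m ω) := by
            field_simp [hcpos.ne', (hwpos ω).ne']

    have hjensen : Real.exp (∑ ω, w ω • v ω) ≤ ∑ ω, w ω • Real.exp (v ω) :=
      convexOn_exp.map_sum_le (fun ω _ => hwnn ω) hwsum (fun _ _ => mem_univ _)
    have hsum_int : ∑ ω, w ω * v ω = ∫ y, bs y ∂μ := by
      have h1 : ∀ ω, w ω * v ω = ∫ y in C ω, bs y ∂μ := by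
        intro ω
        rw [hv, ← mul_assoc, mul_inv_cancel₀ (hwpos ω).ne', one_mul]
      rw [Finset.sum_congr rfl fun ω _ => h1 ω]
      rw [← integral_biUnion_finset Finset.univ (fun ω _ => S.cylC_measurable n ω)
        (S.cylC_disjoint n |>.mono (by simp)) (fun ω _ => hbs_int.integrableOn)]
      rw [S.cylC_union n, setIntegral_univ]
    have hUval : ∫ y, bs y ∂μ = n * U := by
      simp only [hbs]
      rw [integral_finset_sum (Finset.range n)
        (f := fun k x => u (S.shl k x)) (fun k _ =>
          S.cont_integrable (show Continuous fun x => u (S.shl k x) from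
            huc.comp (S.shl_continuous k)))]
      rw [Finset.sum_congr rfl fun k _ => S.integral_shl hinv huc k]
      rw [Finset.sum_const, Finset.card_range, nsmul_eq_mul, hU]
    have hpos : (0:ℝ) < ∑ ω, Real.exp (m ω) :=
      Finset.sum_pos (fun _ _ => Real.exp_pos _) Finset.univ_nonempty
    have hchain : c⁻¹ * Real.exp (n * U) ≤ ∑ ω, Real.exp (m ω) := by
      have e1 : (n : ℝ) * U = ∑ ω, w ω • v ω := by
        rw [← hUval, ← hsum_int]
        exact Finset.sum_congr rfl fun ω _ => by rw [smul_eq_mul]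
      calc c⁻¹ * Real.exp (n * U) = c⁻¹ * Real.exp (∑ ω, w ω • v ω) := by rw [e1]
        _ ≤ c⁻¹ * ∑ ω, w ω • Real.exp (v ω) := by
            have h2 : (0:ℝ) ≤ c⁻¹ := by positivity
            exact mul_le_mul_of_nonneg_left hjensen h2
        _ = ∑ ω, c⁻¹ * (w ω * Real.exp (v ω)) := by
            rw [Finset.mul_sum]
            exact Finset.sum_congr rfl fun ω _ => by rw [smul_eq_mul]
        _ ≤ ∑ ω, Real.exp (m ω) := Finset.sum_le_sum fun ω _ => hexp ω
    have hlog : -Real.log c + n * U ≤ Real.log (∑ ω, Real.exp (m ω)) := by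
      have h1 := Real.log_le_log (by positivity) hchain
      rw [Real.log_mul (inv_ne_zero hcpos.ne') (Real.exp_ne_zero _), Real.log_inv,
        Real.log_exp] at h1
      linarith
    rw [presSeq]
    have hn' : (0:ℝ) < n := by exact_mod_cast hn
    exact (div_le_div_iff_of_pos_right hn').mpr hlog
  -- limit argument
  have hlim : Tendsto (fun n : ℕ => (-Real.log c + n * U) / n) atTop (nhds U) := by
    have h1 : Tendsto (fun n : ℕ => -Real.log c / n + U) atTop (nhds U) := by
      have := (tendsto_const_div_atTop_nhds_zero_nat (-Real.log c)).add_const U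
      simpa using this
    refine h1.congr' ?_
    filter_upwards [eventually_ge_atTop 1] with n hn
    have hn' : (n:ℝ) ≠ 0 := by positivity
    field_simp
  refine le_of_tendsto_of_tendsto' hlim hpres ?_
  intro n
  rcases Nat.eq_zero_or_pos n with h0 | h1
  · subst h0; simp [presSeq]
  · exact key n h1

lemma presSeq_le_of_le {g h : ℝ → ℝ} {s Bh : ℝ} (hBh : ∀ y, h (S.Φ y) ≤ Bh)
    (hle : ∀ y, g (S.Φ y) ≤ h (S.Φ y) + s) (n : ℕ) (hn : 1 ≤ n) :
    S.presSeq g n ≤ S.presSeq h n + s := by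
  have hmle : ∀ ω : Fin n → Fin (S.d + 1),
      sSup (S.birk g n '' S.cylC n ω) ≤ sSup (S.birk h n '' S.cylC n ω) + n * s := by
    intro ω
    refine csSup_le ((S.cylC_nonempty n ω).image _) ?_
    rintro _ ⟨x, hx, rfl⟩
    have h1 : S.birk g n x ≤ S.birk h n x + n * s := by
      rw [birk_eq, birk_eq]
      calc ∑ k ∈ Finset.range n, (fun y => g (S.Φ y)) (S.shl k x)
          ≤ ∑ k ∈ Finset.range n, ((fun y => h (S.Φ y)) (S.shl k x) + s) :=
            Finset.sum_le_sum fun k _ => hle _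
        _ = (∑ k ∈ Finset.range n, (fun y => h (S.Φ y)) (S.shl k x)) + n * s := by
            rw [Finset.sum_add_distrib, Finset.sum_const, Finset.card_range, nsmul_eq_mul]
    have h2 : S.birk h n x ≤ sSup (S.birk h n '' S.cylC n ω) :=
      le_csSup (S.birk_bddAbove hBh n _) ⟨x, hx, rfl⟩
    linarith
  have hposg : (0:ℝ) < ∑ ω : Fin n → Fin (S.d + 1),
      Real.exp (sSup (S.birk g n '' S.cylC n ω)) :=
    Finset.sum_pos (fun _ _ => Real.exp_pos _) Finset.univ_nonempty
  have hposh : (0:ℝ) < ∑ ω : Fin n → Fin (S.d + 1),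
      Real.exp (sSup (S.birk h n '' S.cylC n ω)) :=
    Finset.sum_pos (fun _ _ => Real.exp_pos _) Finset.univ_nonempty
  have hsum : (∑ ω : Fin n → Fin (S.d + 1), Real.exp (sSup (S.birk g n '' S.cylC n ω))) ≤
      Real.exp ((n:ℝ) * s) * ∑ ω : Fin n → Fin (S.d + 1),
        Real.exp (sSup (S.birk h n '' S.cylC n ω)) := by
    rw [Finset.mul_sum]
    refine Finset.sum_le_sum fun ω _ => ?_
    rw [← Real.exp_add]
    exact Real.exp_le_exp.mpr (by linarith [hmle ω])
  have hlog := Real.log_le_log hposg hsum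
  rw [Real.log_mul (Real.exp_ne_zero _) hposh.ne', Real.log_exp] at hlog
  have hn' : (0:ℝ) < n := by exact_mod_cast hn
  rw [presSeq, presSeq]
  calc Real.log (∑ ω : Fin n → Fin (S.d + 1),
        Real.exp (sSup (S.birk g n '' S.cylC n ω)))/(n:ℝ)
      ≤ ((n:ℝ) * s + Real.log (∑ ω : Fin n → Fin (S.d + 1),
        Real.exp (sSup (S.birk h n '' S.cylC n ω))))/(n:ℝ) := (div_le_div_iff_of_pos_right hn').mpr hlog
    _ = Real.log (∑ ω : Fin n → Fin (S.d + 1),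
        Real.exp (sSup (S.birk h n '' S.cylC n ω)))/(n:ℝ) + s := by
        field_simp
        ring

end CIFS

/-- The derivative of `β_α` at `α` is `-(∫φ dν_ψ)/(∫(ψ - αφ) dν_ψ)
= 1/(α - ∫ψ dν_ψ/∫φ dν_ψ)`, and the tangent line to the graph of `β_α` at `(α, 1)`
meets the `x`-axis at `x = ∫ψ dν_ψ/∫φ dν_ψ`. -/
theorem beta_deriv_at_alpha (S : CIFS)
    (α : ℝ) (hα : 0 < α) (ψ : ℝ → ℝ) (hψ : S.GoodPotential α ψ)
    (ν : Measure ℝ) (hprob : IsProbabilityMeasure ν)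
    (hsupp : ν S.Lᶜ = 0) (hgibbs : S.IsGibbs ψ ν)
    (hinv : (Measure.comap S.Φ ν).map S.shift = Measure.comap S.Φ ν)
    (β : ℝ → ℝ)
    (hβ : ∀ t : ℝ, S.HasPressure (fun ξ => t * S.geom ξ + β t * (ψ ξ - α * S.geom ξ)) 0)
    (hdiff : DifferentiableAt ℝ β α) :
    deriv β α = -(∫ ξ, S.geom ξ ∂ν) / ∫ ξ, (ψ ξ - α * S.geom ξ) ∂ν ∧
      deriv β α = 1 / (α - (∫ ξ, ψ ξ ∂ν) / ∫ ξ, S.geom ξ ∂ν) ∧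
      1 + deriv β α * ((∫ ξ, ψ ξ ∂ν) / (∫ ξ, S.geom ξ ∂ν) - α) = 0 := by
  classical
  obtain ⟨hHol, hneg, hPψ, hgt⟩ := hψ
  have Φem := S.measurableEmbedding_Phi
  set μ : Measure (ℕ → Fin (S.d + 1)) := Measure.comap S.Φ ν with hμ
  have hrange : Set.range S.Φ = S.L := S.range_Phi
  have hLmeas : MeasurableSet S.L := by
    rw [← hrange]
    exact (isCompact_range S.Phi_continuous).isClosed.measurableSet
  have hνL : ν S.L = 1 := by
    have h1 := measure_add_measure_compl (μ := ν) hLmeas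
    rw [hsupp, add_zero] at h1
    rw [h1, measure_univ]
  have hμuniv : μ Set.univ = 1 := by
    rw [hμ, Φem.comap_apply, Set.image_univ, hrange, hνL]
  haveI : IsProbabilityMeasure μ := ⟨hμuniv⟩
  have hmap : μ.map S.Φ = ν := by
    rw [hμ, Φem.map_comap, hrange]
    exact Measure.restrict_eq_self_of_ae_mem (mem_ae_iff.mpr hsupp)
  set G := S.gphi with hG
  have hGc := S.gphi_continuous
  set P : (ℕ → Fin (S.d + 1)) → ℝ := fun y => ψ (S.Φ y) with hP
  have hPc : Continuous P := S.psiPhi_continuous hHol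
  set Q : (ℕ → Fin (S.d + 1)) → ℝ := fun y => P y - α * G y with hQ
  have hQc : Continuous Q := hPc.sub (continuous_const.mul hGc)
  have hGint : Integrable G μ := S.cont_integrable hGc
  have hPint : Integrable P μ := S.cont_integrable hPc
  have hQint : Integrable Q μ := S.cont_integrable hQc
  set Iφ := ∫ y, G y ∂μ with hIφdef
  set Iψv := ∫ y, P y ∂μ with hIψdef
  set IQ := ∫ y, Q y ∂μ with hIQdef
  have hIgeom : ∫ ξ, S.geom ξ ∂ν = Iφ := by
    rw [← hmap, Φem.integral_map, hIφdef]
    exact integral_congr_ae (Filter.Eventually.of_forall fun x => S.geom_Phi x)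
  have hIψ : ∫ ξ, ψ ξ ∂ν = Iψv := by rw [← hmap, Φem.integral_map, hIψdef]
  have hIQeq : ∫ ξ, (ψ ξ - α * S.geom ξ) ∂ν = IQ := by
    rw [← hmap, Φem.integral_map, hIQdef]
    refine integral_congr_ae (Filter.Eventually.of_forall fun x => ?_)
    simp only [hQ, hP, hG, S.geom_Phi]
  have hQsplit : IQ = Iψv - α * Iφ := by
    have h1 : ∫ y, (P y - α * G y) ∂μ = (∫ y, P y ∂μ) - ∫ y, α * G y ∂μ :=
      integral_sub hPint (hGint.const_mul α)
    rw [integral_const_mul] at h1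
    calc IQ = ∫ y, (P y - α * G y) ∂μ := by rw [hIQdef]
      _ = Iψv - α * Iφ := h1
  have hαG : ∀ y, α * G y < P y := fun y => by
    have h0 := hgt (S.Φ y) (S.Phi_mem_L y)
    simp only [hG, hP]
    rw [← S.geom_Phi y]
    exact h0
  have hQpos : ∀ y, 0 < Q y := fun y => by
    have h1 := hαG y
    simp only [hQ]
    linarith
  obtain ⟨z, _, hz⟩ := isCompact_univ.exists_isMinOn univ_nonempty hQc.continuousOn
  set δ := Q z with hδdef
  have hδ : 0 < δ := hQpos z
  have hQδ : ∀ y, δ ≤ Q y := fun y => hz (mem_univ y)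
  have hIQδ : δ ≤ IQ := by
    have h1 : ∫ _y, δ ∂μ ≤ IQ := integral_mono (integrable_const δ) hQint hQδ
    simpa using h1
  have hIQpos : 0 < IQ := lt_of_lt_of_le hδ hIQδ
  have hGneg : ∀ y, G y < 0 := fun y => by
    have h2 := hαG y
    have h3 : P y < 0 := hneg (S.Φ y) (S.Phi_mem_L y)
    nlinarith
  obtain ⟨z2, _, hz2⟩ := isCompact_univ.exists_isMaxOn univ_nonempty hGc.continuousOn
  have hIφneg : Iφ < 0 := by
    have h1 : Iφ ≤ G z2 := by
      have h2 : ∫ y, G y ∂μ ≤ ∫ _y, G z2 ∂μ :=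
        integral_mono hGint (integrable_const _) (fun y => hz2 (mem_univ y))
      simpa using h2
    exact lt_of_le_of_lt h1 (hGneg z2)
  obtain ⟨c, hc1, hcb⟩ := hgibbs
  have hgibC : ∀ (n : ℕ) (x : ℕ → Fin (S.d + 1)),
      c⁻¹ * Real.exp (S.birk ψ n x) ≤ (μ (S.cylC n fun i => x i.1)).toReal ∧
        (μ (S.cylC n fun i => x i.1)).toReal ≤ c * Real.exp (S.birk ψ n x) := by
    intro n x
    have hx : x ∈ S.cylC n (fun i => x i.1) := fun i => rfl
    have e1 : μ (S.cylC n fun i => x i.1) = ν (S.cyl (S.code x n)) := by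
      rw [hμ, Φem.comap_apply, S.cyl_eq n _ hx]
    rw [e1]
    exact hcb n x
  have hinvμ : μ.map S.shift = μ := hinv
  have key : ∀ t : ℝ, (t - α) * Iφ + (β t - 1) * IQ ≤ 0 := by
    intro t
    set g : ℝ → ℝ := fun ξ => t * S.geom ξ + β t * (ψ ξ - α * S.geom ξ) with hg
    have hgc : Continuous fun y => g (S.Φ y) := by
      have e : (fun y => g (S.Φ y)) = fun y => t * G y + β t * Q y := funext fun y => by
        simp only [hg, hQ, hP, hG, S.geom_Phi]
      rw [e]
      exact (continuous_const.mul hGc).add (continuous_const.mul hQc)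
    have hkey := S.integral_sub_nonpos hc1 hgc hPc hgibC hinvμ (hβ t)
    have e2 : ∫ y, (g (S.Φ y) - ψ (S.Φ y)) ∂μ = (t - α) * Iφ + (β t - 1) * IQ := by
      have e : ∀ y, g (S.Φ y) - ψ (S.Φ y) = (t - α) * G y + (β t - 1) * Q y := fun y => by
        simp only [hg, hQ, hP, hG, S.geom_Phi]
        ring
      rw [integral_congr_ae (Filter.Eventually.of_forall e),
        integral_add (hGint.const_mul _) (hQint.const_mul _),
        integral_const_mul, integral_const_mul]
    rw [e2] at hkey
    exact hkey
  have hβα_le : β α ≤ 1 := by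
    have h1 := key α
    nlinarith
  have hβα_ge : 1 ≤ β α := by
    set ε₀ := β α - 1 with hε₀
    have hε₀le : ε₀ ≤ 0 := by rw [hε₀]; linarith
    obtain ⟨Bψ, hBψ⟩ := S.exists_bound hPc
    have hle : ∀ y, (fun ξ => α * S.geom ξ + β α * (ψ ξ - α * S.geom ξ)) (S.Φ y) ≤
        ψ (S.Φ y) + ε₀ * δ := by
      intro y
      have e : (fun ξ => α * S.geom ξ + β α * (ψ ξ - α * S.geom ξ)) (S.Φ y) =
          P y + ε₀ * Q y := by
        simp only [hε₀, hQ, hP, hG, S.geom_Phi]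
        ring
      rw [e]
      have h4 : (- ε₀) * (Q y - δ) ≥ 0 :=
        mul_nonneg (neg_nonneg.mpr hε₀le) (sub_nonneg.mpr (hQδ y))
      rw [hP]
      nlinarith
    have hcomp : ∀ n : ℕ, 1 ≤ n →
        S.presSeq (fun ξ => α * S.geom ξ + β α * (ψ ξ - α * S.geom ξ)) n ≤
          S.presSeq ψ n + ε₀ * δ :=
      fun n hn => S.presSeq_le_of_le hBψ hle n hn
    have hl1 := hβ α
    have hl2 : Tendsto (fun n : ℕ => S.presSeq ψ n + ε₀ * δ) atTop (nhds (0 + ε₀ * δ)) :=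
      hPψ.add_const _
    have h5 : (0:ℝ) ≤ 0 + ε₀ * δ := by
      refine le_of_tendsto_of_tendsto hl1 hl2 ?_
      filter_upwards [eventually_ge_atTop 1] with n hn
      exact hcomp n hn
    nlinarith
  have hβα : β α = 1 := le_antisymm hβα_le hβα_ge
  set D := deriv β α with hD
  have hF : HasDerivAt (fun t => (t - α) * Iφ + (β t - 1) * IQ) (Iφ + D * IQ) α := by
    have h1 : HasDerivAt (fun t => (t - α) * Iφ) Iφ α := by
      simpa using ((hasDerivAt_id α).sub_const α).mul_const Iφ
    have h2 : HasDerivAt (fun t => (β t - 1) * IQ) (D * IQ) α :=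
      (hdiff.hasDerivAt.sub_const 1).mul_const IQ
    exact h1.add h2
  have hmax : IsLocalMax (fun t => (t - α) * Iφ + (β t - 1) * IQ) α := by
    refine Filter.Eventually.of_forall fun t => ?_
    have hFα : (α - α) * Iφ + (β α - 1) * IQ = 0 := by rw [hβα]; ring
    exact le_trans (key t) (le_of_eq hFα.symm)
  have hzero : Iφ + D * IQ = 0 := hmax.hasDerivAt_eq_zero hF
  rw [hIgeom, hIψ, hIQeq]
  have hIφne : Iφ ≠ 0 := hIφneg.ne
  have hIQne : IQ ≠ 0 := hIQpos.ne'
  refine ⟨?_, ?_, ?_⟩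
  · rw [eq_div_iff hIQne]
    linarith
  · have hden : α - Iψv / Iφ = -IQ / Iφ := by
      field_simp
      linarith [hQsplit]
    rw [hden]
    rw [div_div_eq_mul_div, one_mul]
    rw [eq_div_iff (by simpa using hIQne : -IQ ≠ 0)]
    field_simp
    linarith
  · have hrel : Iψv / Iφ - α = IQ / Iφ := by
      field_simp
      linarith [hQsplit]
    rw [hrel]
    have : D * (IQ / Iφ) = -1 := by
      have h6 : D * IQ = -Iφ := by linarith
      field_simp
      linarith
    rw [this]
    ring
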